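/- In the trace monoid of hikes on a finite digraph G (generated by simple cycles, with disjoint cycles commuting), the Möbius function μ, defined as the multiplicative inverse of the constant function 1 under the Dirichlet-type convolution, satisfies: μ(h) = (-1)^{Ω(h)} if h is a self-avoiding hike (a product of pairwise vertex-disjoint simple cycles, Ω(h) counting the factors), and μ(h) = 0 otherwise. -/

import Mathlib

/-- A simple cycle of a digraph `Adj` on `Fin N`: a nonempty vertex set `verts` together with a
permutation acting as a single cyclic orbit on `verts` (identity elsewhere), each step of which
follows an edge of the digraph.  Fixed points of `perm` inside a singleton `verts` are loops. -/
structure SimpleCycle (N : ℕ) (Adj : Fin N → Fin N → Prop) where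
  verts : Finset (Fin N)
  perm : Equiv.Perm (Fin N)
  nonempty : verts.Nonempty
  fixes : ∀ x, x ∉ verts → perm x = x
  cyclic : ∀ x ∈ verts, ∀ y ∈ verts, ∃ k : ℕ, (perm ^ k) x = y
  edges : ∀ x ∈ verts, Adj x (perm x)

/-- The length of a simple cycle: the number of its vertices (= number of its edges). -/
def SimpleCycle.length {N : ℕ} {Adj : Fin N → Fin N → Prop} (c : SimpleCycle N Adj) : ℕ :=
  c.verts.card

/-- Generating relation of the trace monoid of hikes: two adjacent simple cycles may be swapped
iff they are vertex-disjoint. -/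
def hikeRel {N : ℕ} (Adj : Fin N → Fin N → Prop)
    (x y : FreeMonoid (SimpleCycle N Adj)) : Prop :=
  ∃ a b : SimpleCycle N Adj, Disjoint a.verts b.verts ∧
    x = FreeMonoid.of a * FreeMonoid.of b ∧ y = FreeMonoid.of b * FreeMonoid.of a

/-- The congruence on the free monoid over simple cycles generated by commutation of
vertex-disjoint cycles. -/
def hikeCon {N : ℕ} (Adj : Fin N → Fin N → Prop) : Con (FreeMonoid (SimpleCycle N Adj)) :=
  conGen (hikeRel Adj)

/-- The trace monoid of hikes on the digraph `Adj`. -/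
def Hike {N : ℕ} (Adj : Fin N → Fin N → Prop) : Type _ := (hikeCon Adj).Quotient

instance {N : ℕ} (Adj : Fin N → Fin N → Prop) : Monoid (Hike Adj) :=
  inferInstanceAs (Monoid (hikeCon Adj).Quotient)

/-- The hike determined by a word (list) of simple cycles. -/
def Hike.mk {N : ℕ} {Adj : Fin N → Fin N → Prop} (l : List (SimpleCycle N Adj)) : Hike Adj :=
  (hikeCon Adj).mk' (FreeMonoid.ofList l)

/-- `h` is a hike of length `ℓ`: some (hence any) word representing it has total length `ℓ`. -/
def Hike.lengthIs {N : ℕ} {Adj : Fin N → Fin N → Prop} (h : Hike Adj) (ℓ : ℕ) : Prop :=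
  ∃ l : List (SimpleCycle N Adj), h = Hike.mk l ∧ (l.map fun c => c.length).sum = ℓ


open scoped Classical

/- ============ development ============ -/
namespace HikeAux

variable {N : ℕ} {Adj : Fin N → Fin N → Prop}

def D (a b : SimpleCycle N Adj) : Prop := Disjoint a.verts b.verts

lemma D_symm {a b : SimpleCycle N Adj} (h : D a b) : D b a := h.symm

lemma D_irrefl (a : SimpleCycle N Adj) : ¬ D a a := by
  intro h
  exact a.nonempty.ne_empty (by simpa using disjoint_self.mp h)

noncomputable instance : Fintype (SimpleCycle N Adj) :=
  Fintype.ofInjective (fun c => (c.verts, c.perm)) (by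
    rintro ⟨⟩ ⟨⟩ h
    simp_all)

lemma mk_append (l₁ l₂ : List (SimpleCycle N Adj)) :
    Hike.mk (l₁ ++ l₂) = Hike.mk l₁ * Hike.mk l₂ := by
  unfold Hike.mk
  rw [FreeMonoid.ofList_append, map_mul]
  rfl

lemma mk_nil : Hike.mk ([] : List (SimpleCycle N Adj)) = 1 := rfl

lemma mk_cons (a : SimpleCycle N Adj) (l : List (SimpleCycle N Adj)) :
    Hike.mk (a :: l) = Hike.mk [a] * Hike.mk l := by
  simpa using mk_append [a] l

lemma mk_surjective (x : Hike Adj) : ∃ l, x = Hike.mk l := by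
  obtain ⟨w, rfl⟩ := Con.mk'_surjective (c := hikeCon Adj) x
  exact ⟨FreeMonoid.toList w, by simp [Hike.mk]; rfl⟩

lemma mk_eq_iff {u v : List (SimpleCycle N Adj)} :
    Hike.mk u = Hike.mk v ↔ hikeCon Adj (FreeMonoid.ofList u) (FreeMonoid.ofList v) :=
  Con.eq _

lemma hikeCon_iff {x y : FreeMonoid (SimpleCycle N Adj)} :
    hikeCon Adj x y ↔ ConGen.Rel (hikeRel Adj) x y := Iff.rfl

lemma mk_swap2 {a b : SimpleCycle N Adj} (h : D a b) :
    Hike.mk [a, b] = Hike.mk [b, a] := by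
  rw [mk_eq_iff]
  exact ConGen.Rel.of _ _ ⟨a, b, h, rfl, rfl⟩

lemma mk_swap {a b : SimpleCycle N Adj} (h : D a b) (l : List (SimpleCycle N Adj)) :
    Hike.mk (a :: b :: l) = Hike.mk (b :: a :: l) := by
  have := mk_swap2 h
  calc Hike.mk (a :: b :: l) = Hike.mk [a,b] * Hike.mk l := by
        simpa using mk_append [a,b] l
    _ = Hike.mk [b,a] * Hike.mk l := by rw [this]
    _ = Hike.mk (b :: a :: l) := by simpa using (mk_append [b,a] l).symm

noncomputable def liftHom {P : Type*} [Monoid P] (f : SimpleCycle N Adj → P)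
    (hf : ∀ a b, D a b → f a * f b = f b * f a) : Hike Adj →* P :=
  (hikeCon Adj).lift (FreeMonoid.lift f) (Con.conGen_le.mpr (by
    rintro x y ⟨a, b, hab, rfl, rfl⟩
    rw [Con.ker_rel]
    simp [hf a b hab]))

lemma liftHom_mk {P : Type*} [Monoid P] (f : SimpleCycle N Adj → P)
    (hf : ∀ a b, D a b → f a * f b = f b * f a) (l : List (SimpleCycle N Adj)) :
    liftHom f hf (Hike.mk l) = (l.map f).prod := by
  unfold liftHom Hike.mk
  erw [Con.lift_mk', FreeMonoid.lift_apply]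
  simp


noncomputable def ms : Hike Adj →* Multiplicative (Multiset (SimpleCycle N Adj)) :=
  liftHom (fun a => Multiplicative.ofAdd {a}) (fun a b _ => by
    rw [← ofAdd_add, ← ofAdd_add, add_comm])

noncomputable def msA (x : Hike Adj) : Multiset (SimpleCycle N Adj) :=
  Multiplicative.toAdd (ms x)

lemma msA_mk (l : List (SimpleCycle N Adj)) : msA (Hike.mk l) = (l : Multiset _) := by
  unfold msA ms
  rw [liftHom_mk]
  induction l with
  | nil => simp
  | cons a l ih => simp_all

lemma msA_mul (x y : Hike Adj) : msA (x * y) = msA x + msA y := by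
  unfold msA; rw [map_mul]; rfl

lemma msA_one : msA (1 : Hike Adj) = 0 := by
  unfold msA; rw [map_one]; rfl

noncomputable def len (x : Hike Adj) : ℕ := Multiset.card (msA x)

lemma len_mk (l : List (SimpleCycle N Adj)) : len (Hike.mk l) = l.length := by
  unfold len; rw [msA_mk]; simp

lemma len_mul (x y : Hike Adj) : len (x * y) = len x + len y := by
  unfold len; rw [msA_mul]; simp

lemma len_one : len (1 : Hike Adj) = 0 := by
  unfold len; rw [msA_one]; simp

lemma eq_one_of_len_eq_zero {x : Hike Adj} (h : len x = 0) : x = 1 := by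
  obtain ⟨l, rfl⟩ := mk_surjective x
  rw [len_mk] at h
  rw [List.length_eq_zero_iff.mp h, mk_nil]

lemma multiset_eq_of_mk_eq {u v : List (SimpleCycle N Adj)} (h : Hike.mk u = Hike.mk v) :
    (u : Multiset (SimpleCycle N Adj)) = (v : Multiset _) := by
  rw [← msA_mk (Adj := Adj) u, ← msA_mk (Adj := Adj) v, h]


/-! ### The `G` predicate: letter can be brought to the front -/

def Gp (b : SimpleCycle N Adj) (l : List (SimpleCycle N Adj)) : Prop :=
  ∃ l₁ l₂, l = l₁ ++ b :: l₂ ∧ ∀ x ∈ l₁, D b x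

lemma G_front {b : SimpleCycle N Adj} {l₁ l₂ : List (SimpleCycle N Adj)}
    (h : ∀ x ∈ l₁, D b x) :
    Hike.mk (l₁ ++ b :: l₂) = Hike.mk (b :: (l₁ ++ l₂)) := by
  induction l₁ with
  | nil => rfl
  | cons x l₁ ih =>
      have hx : D b x := h x (by simp)
      calc Hike.mk ((x :: l₁) ++ b :: l₂) = Hike.mk [x] * Hike.mk (l₁ ++ b :: l₂) := mk_cons _ _
        _ = Hike.mk [x] * Hike.mk (b :: (l₁ ++ l₂)) := by
              rw [ih (fun y hy => h y (by simp [hy]))]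
        _ = Hike.mk (x :: b :: (l₁ ++ l₂)) := (mk_cons _ _).symm
        _ = Hike.mk (b :: x :: (l₁ ++ l₂)) := mk_swap (D_symm hx) _

lemma Gp_append {b : SimpleCycle N Adj} {u v : List (SimpleCycle N Adj)} :
    Gp b (u ++ v) ↔ Gp b u ∨ ((∀ x ∈ u, D b x) ∧ Gp b v) := by
  constructor
  · rintro ⟨l₁, l₂, heq, hD⟩
    rcases List.append_eq_append_iff.mp heq with ⟨a', ha1, ha2⟩ | ⟨c', hc1, hc2⟩
    · right
      exact ⟨fun x hx => hD x (by simp [ha1, hx]), a', l₂, ha2,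
        fun x hx => hD x (by simp [ha1, hx])⟩
    · cases c' with
      | nil =>
          right
          simp only [List.nil_append] at hc2
          exact ⟨fun x hx => hD x (by simp_all), [], l₂, by simp [hc2.symm], by simp⟩
      | cons z zs =>
          left
          obtain ⟨hz, hzs⟩ := List.cons.injEq .. ▸ hc2
          exact ⟨l₁, zs, by rw [hc1, ← hz], hD⟩
  · rintro (⟨l₁, l₂, heq, hD⟩ | ⟨hu, l₁, l₂, heq, hD⟩)
    · exact ⟨l₁, l₂ ++ v, by simp [heq], hD⟩
    · exact ⟨u ++ l₁, l₂, by simp [heq], by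
        intro x hx
        rcases List.mem_append.mp hx with h | h
        · exact hu x h
        · exact hD x h⟩


lemma Gp_pair {b x y : SimpleCycle N Adj} :
    Gp b [x, y] ↔ b = x ∨ (b = y ∧ D b x) := by
  constructor
  · rintro ⟨l₁, l₂, heq, hD⟩
    cases l₁ with
    | nil => exact Or.inl (by simpa using (List.cons.injEq .. ▸ heq).1.symm)
    | cons z zs =>
        obtain ⟨hz, hzs⟩ := List.cons.injEq .. ▸ heq
        cases zs with
        | nil =>
            obtain ⟨hy, -⟩ := List.cons.injEq .. ▸ hzs
            exact Or.inr ⟨hy.symm, hz ▸ hD z (by simp)⟩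
        | cons w ws => simp [List.cons.injEq] at hzs
  · rintro (rfl | ⟨rfl, hD⟩)
    · exact ⟨[], [y], rfl, by simp⟩
    · exact ⟨[x], [], rfl, by simpa using hD⟩

lemma Gp_invariant {u v : FreeMonoid (SimpleCycle N Adj)} (h : hikeCon Adj u v)
    (b : SimpleCycle N Adj) : Gp b u.toList ↔ Gp b v.toList := by
  induction h with
  | of x y hxy =>
      obtain ⟨a, c, hac, rfl, rfl⟩ := hxy
      have h1 : (FreeMonoid.of a * FreeMonoid.of c).toList = [a, c] := rfl
      have h2 : (FreeMonoid.of c * FreeMonoid.of a).toList = [c, a] := rfl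
      rw [h1, h2, Gp_pair, Gp_pair]
      constructor
      · rintro (rfl | ⟨rfl, hD⟩)
        · exact Or.inr ⟨rfl, hac⟩
        · exact Or.inl rfl
      · rintro (rfl | ⟨rfl, hD⟩)
        · exact Or.inr ⟨rfl, D_symm hac⟩
        · exact Or.inl rfl
  | refl x => exact Iff.rfl
  | symm _ ih => exact ih.symm
  | trans _ _ ih1 ih2 => exact ih1.trans ih2
  | mul h1 h2 ih1 ih2 =>
      rename_i w x y z
      have m1 : ∀ c, c ∈ w.toList ↔ c ∈ x.toList := by
        intro c
        have : (w.toList : Multiset (SimpleCycle N Adj)) = (x.toList : Multiset (SimpleCycle N Adj)) := by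
          apply multiset_eq_of_mk_eq (Adj := Adj)
          show (hikeCon Adj).mk' (FreeMonoid.ofList (FreeMonoid.toList w)) =
            (hikeCon Adj).mk' (FreeMonoid.ofList (FreeMonoid.toList x))
          rw [FreeMonoid.ofList_toList, FreeMonoid.ofList_toList]
          exact (Con.eq _).mpr (hikeCon_iff.mpr h1)
        constructor <;> intro hm
        · have h2 : c ∈ (x.toList : Multiset (SimpleCycle N Adj)) := this ▸ (by simpa using hm)
          simpa using h2
        · have h2 : c ∈ (w.toList : Multiset (SimpleCycle N Adj)) := this.symm ▸ (by simpa using hm)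
          simpa using h2
      have happ : ∀ (p q : FreeMonoid (SimpleCycle N Adj)), (p * q).toList = p.toList ++ q.toList :=
        FreeMonoid.toList_mul
      rw [happ, happ, Gp_append, Gp_append]
      constructor
      · rintro (hg | ⟨hall, hg⟩)
        · exact Or.inl (ih1.mp hg)
        · exact Or.inr ⟨fun c hc => hall c ((m1 c).mpr hc), ih2.mp hg⟩
      · rintro (hg | ⟨hall, hg⟩)
        · exact Or.inl (ih1.mpr hg)
        · exact Or.inr ⟨fun c hc => hall c ((m1 c).mp hc), ih2.mpr hg⟩

lemma Gp_of_mk_eq {u v : List (SimpleCycle N Adj)} (h : Hike.mk u = Hike.mk v)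
    (b : SimpleCycle N Adj) : Gp b u ↔ Gp b v := by
  have := Gp_invariant (mk_eq_iff.mp h) b
  simpa using this


/-! ### Projections to pairs of dependent letters -/

noncomputable def proj (b c : SimpleCycle N Adj) (l : List (SimpleCycle N Adj)) :
    List (SimpleCycle N Adj) :=
  l.filter (fun x => decide (x = b ∨ x = c))

lemma proj_append (b c : SimpleCycle N Adj) (u v : List (SimpleCycle N Adj)) :
    proj b c (u ++ v) = proj b c u ++ proj b c v := by
  simp [proj, List.filter_append]

lemma proj_cons (b c x : SimpleCycle N Adj) (l : List (SimpleCycle N Adj)) :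
    proj b c (x :: l) = if x = b ∨ x = c then x :: proj b c l else proj b c l := by
  unfold proj
  by_cases h : x = b ∨ x = c <;> simp [List.filter_cons, h]

lemma proj_invariant {u v : FreeMonoid (SimpleCycle N Adj)} (h : hikeCon Adj u v)
    {b c : SimpleCycle N Adj} (hbc : ¬ D b c) :
    proj b c u.toList = proj b c v.toList := by
  induction h with
  | of x y hxy =>
      obtain ⟨a, e, hae, rfl, rfl⟩ := hxy
      have h1 : (FreeMonoid.of a * FreeMonoid.of e).toList = [a, e] := rfl
      have h2 : (FreeMonoid.of e * FreeMonoid.of a).toList = [e, a] := rfl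
      rw [h1, h2]
      by_cases hne : a = e
      · subst hne; rfl
      · by_cases pa : a = b ∨ a = c <;> by_cases pe : e = b ∨ e = c
        · exfalso
          rcases pa with rfl | rfl <;> rcases pe with rfl | rfl
          · exact hne rfl
          · exact hbc hae
          · exact hbc (D_symm hae)
          · exact hne rfl
        all_goals simp [proj_cons, pa, pe, proj]
  | refl x => rfl
  | symm _ ih => exact ih.symm
  | trans _ _ ih1 ih2 => exact ih1.trans ih2
  | mul h1 h2 ih1 ih2 =>
      rename_i w x y z
      have happ : ∀ (p q : FreeMonoid (SimpleCycle N Adj)), (p * q).toList = p.toList ++ q.toList :=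
        FreeMonoid.toList_mul
      rw [happ, happ, proj_append, proj_append, ih1, ih2]

lemma proj_of_mk_eq {u v : List (SimpleCycle N Adj)} (h : Hike.mk u = Hike.mk v)
    {b c : SimpleCycle N Adj} (hbc : ¬ D b c) : proj b c u = proj b c v := by
  have := proj_invariant (mk_eq_iff.mp h) hbc
  simpa using this

lemma first_split {x : SimpleCycle N Adj} {v : List (SimpleCycle N Adj)} (h : x ∈ v) :
    ∃ v₁ v₂, v = v₁ ++ x :: v₂ ∧ x ∉ v₁ := by
  induction v with
  | nil => simp at h
  | cons y ys ih =>
      by_cases hxy : x = y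
      · exact ⟨[], ys, by simp [hxy], by simp⟩
      · have : x ∈ ys := by
          rcases List.mem_cons.mp h with h' | h'
          · exact absurd h' hxy
          · exact h'
        obtain ⟨v₁, v₂, heq, hmem⟩ := ih this
        exact ⟨y :: v₁, v₂, by simp [heq], by simp [hxy, hmem]⟩

/-- Reconstruction: words with equal projections onto all dependent pairs give equal hikes. -/
lemma mk_eq_of_proj : ∀ (u v : List (SimpleCycle N Adj)),
    (∀ b c, ¬ D b c → proj b c u = proj b c v) → Hike.mk u = Hike.mk v := by
  intro u
  induction u with
  | nil =>
      intro v hp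
      cases v with
      | nil => rfl
      | cons y ys =>
          exfalso
          have := hp y y (D_irrefl y)
          rw [proj_cons] at this
          simp [proj] at this
  | cons x u' ih =>
      intro v hp
      -- x occurs in v
      have hxv : x ∈ v := by
        by_contra hxv
        have := hp x x (D_irrefl x)
        rw [proj_cons] at this
        simp at this
        have : x ∈ proj x x v := by rw [← this]; simp
        unfold proj at this
        simp at this
        exact hxv this
      obtain ⟨v₁, v₂, rfl, hxv₁⟩ := first_split hxv
      -- all letters before x in v commute with x
      have hall : ∀ e ∈ v₁, D x e := by
        intro e he
        by_contra hxe
        have hex : e ≠ x := fun h => hxv₁ (h ▸ he)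
        have hproj := hp x e hxe
        rw [proj_cons] at hproj
        simp at hproj
        rw [proj_append, proj_cons] at hproj
        -- LHS starts with x, RHS starts with an element of proj x e v₁ which is all e's
        have hne : proj x e v₁ ≠ [] := by
          unfold proj
          intro hemp
          have : e ∈ List.filter (fun y => decide (y = x ∨ y = e)) v₁ := by
            simp [he]
          rw [hemp] at this
          simp at this
        obtain ⟨z, zs, hz⟩ := List.exists_cons_of_ne_nil hne
        have hzmem : z ∈ proj x e v₁ := by rw [hz]; simp
        have hze : z = e := by
          unfold proj at hzmem
          have := List.of_mem_filter hzmem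
          have hzor : z = x ∨ z = e := by simpa using this
          rcases hzor with rfl | rfl
          · exact absurd (List.mem_of_mem_filter hzmem) hxv₁
          · rfl
        rw [hz] at hproj
        simp at hproj
        obtain ⟨h1, -⟩ := hproj
        exact hex (by rw [← hze, ← h1])
      -- rearrange v
      have hv : Hike.mk (v₁ ++ x :: v₂) = Hike.mk (x :: (v₁ ++ v₂)) := G_front hall
      -- projections for the tails
      have hstrip : ∀ (b c y : SimpleCycle N Adj) (l m : List (SimpleCycle N Adj)),
          proj b c (y :: l) = proj b c (y :: m) → proj b c l = proj b c m := by
        intro b c y l m h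
        rw [proj_cons, proj_cons] at h
        by_cases hy : y = b ∨ y = c
        · simp only [if_pos hy] at h
          exact List.tail_eq_of_cons_eq h
        · simpa [hy] using h
      have hp' : ∀ b c, ¬ D b c → proj b c u' = proj b c (v₁ ++ v₂) := by
        intro b c hbc
        have h1 := hp b c hbc
        have h2 := proj_of_mk_eq hv hbc
        exact hstrip b c x _ _ (h1.trans h2)
      calc Hike.mk (x :: u') = Hike.mk [x] * Hike.mk u' := mk_cons _ _
        _ = Hike.mk [x] * Hike.mk (v₁ ++ v₂) := by rw [ih _ hp']
        _ = Hike.mk (x :: (v₁ ++ v₂)) := (mk_cons _ _).symm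
        _ = Hike.mk (v₁ ++ x :: v₂) := hv.symm


lemma proj_strip (b c y : SimpleCycle N Adj) (l m : List (SimpleCycle N Adj))
    (h : proj b c (y :: l) = proj b c (y :: m)) : proj b c l = proj b c m := by
  rw [proj_cons, proj_cons] at h
  by_cases hy : y = b ∨ y = c
  · simp only [if_pos hy] at h
    exact List.tail_eq_of_cons_eq h
  · simpa [hy] using h

/-- Left cancellation by a letter. -/
lemma cancel_left {a : SimpleCycle N Adj} {x y : Hike Adj}
    (h : Hike.mk [a] * x = Hike.mk [a] * y) : x = y := by
  obtain ⟨u, rfl⟩ := mk_surjective x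
  obtain ⟨v, rfl⟩ := mk_surjective y
  have h' : Hike.mk (a :: u) = Hike.mk (a :: v) := by rw [mk_cons, mk_cons]; exact h
  apply mk_eq_of_proj
  intro b c hbc
  exact proj_strip b c a u v (proj_of_mk_eq h' hbc)

/-- `b` is an initial letter of the hike `e`. -/
def Fdiv (b : SimpleCycle N Adj) (e : Hike Adj) : Prop :=
  ∃ e', e = Hike.mk [b] * e'

lemma Fdiv_mk_iff {b : SimpleCycle N Adj} {l : List (SimpleCycle N Adj)} :
    Fdiv b (Hike.mk l) ↔ Gp b l := by
  constructor
  · rintro ⟨e', he⟩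
    obtain ⟨w, rfl⟩ := mk_surjective e'
    have : Hike.mk l = Hike.mk (b :: w) := by rw [he]; exact (mk_cons b w).symm
    exact (Gp_of_mk_eq this b).mpr ⟨[], w, rfl, by simp⟩
  · rintro ⟨l₁, l₂, rfl, hD⟩
    exact ⟨Hike.mk (l₁ ++ l₂), by rw [G_front hD, mk_cons]⟩

lemma Fdiv_cons {a b : SimpleCycle N Adj} (hne : b ≠ a) {e : Hike Adj}
    (h : Fdiv b (Hike.mk [a] * e)) : D b a ∧ Fdiv b e := by
  obtain ⟨u, rfl⟩ := mk_surjective e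
  rw [← mk_cons, Fdiv_mk_iff] at h
  obtain ⟨l₁, l₂, heq, hD⟩ := h
  cases l₁ with
  | nil =>
      exfalso
      exact hne (List.cons.injEq .. ▸ heq).1.symm
  | cons z zs =>
      obtain ⟨hz, hzs⟩ := List.cons.injEq .. ▸ heq
      refine ⟨hz ▸ hD z (by simp), ?_⟩
      rw [Fdiv_mk_iff]
      exact ⟨zs, l₂, hzs, fun y hy => hD y (by simp [hy])⟩

lemma Fdiv_cons_of {a b : SimpleCycle N Adj} (hD : D b a) {e : Hike Adj}
    (h : Fdiv b e) : Fdiv b (Hike.mk [a] * e) := by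
  obtain ⟨e', rfl⟩ := h
  refine ⟨Hike.mk [a] * e', ?_⟩
  rw [← mul_assoc, ← mul_assoc]
  congr 1
  rw [← mk_append, ← mk_append]
  exact mk_swap2 (D_symm hD)

/-- Permuting a pairwise-disjoint word does not change the hike. -/
lemma mk_perm {γ γ' : List (SimpleCycle N Adj)} (hp : γ.Perm γ')
    (h : γ.Pairwise D) : Hike.mk γ = Hike.mk γ' := by
  induction hp with
  | nil => rfl
  | cons x _ ih =>
      rename_i l₁ l₂ _
      calc Hike.mk (x :: l₁) = Hike.mk [x] * Hike.mk l₁ := mk_cons _ _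
        _ = Hike.mk [x] * Hike.mk l₂ := by rw [ih (List.Pairwise.of_cons h)]
        _ = Hike.mk (x :: l₂) := (mk_cons _ _).symm
  | swap x y l =>
      exact mk_swap (List.rel_of_pairwise_cons h (by simp)) l
  | trans h1 h2 ih1 ih2 =>
      exact (ih1 h).trans (ih2 ((h1.pairwise_iff (fun hab => D_symm hab)).mp h))


/-! ### Self-avoiding hikes, representatives, the order, and the `A`-set -/

def SA (x : Hike Adj) : Prop := ∃ l, x = Hike.mk l ∧ l.Pairwise D

noncomputable def rep (x : Hike Adj) : List (SimpleCycle N Adj) :=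
  if h : SA x then h.choose else []

lemma rep_spec {x : Hike Adj} (h : SA x) :
    x = Hike.mk (rep x) ∧ (rep x).Pairwise D := by
  unfold rep
  rw [dif_pos h]
  exact h.choose_spec

lemma pairwise_nodup {l : List (SimpleCycle N Adj)} (h : l.Pairwise D) : l.Nodup :=
  h.imp (fun hab => by rintro rfl; exact D_irrefl _ hab)

lemma rep_nodup {x : Hike Adj} (h : SA x) : (rep x).Nodup :=
  pairwise_nodup (rep_spec h).2

lemma mem_rep_iff {x : Hike Adj} (h : SA x) {l : List (SimpleCycle N Adj)}
    (hl : x = Hike.mk l) {b : SimpleCycle N Adj} : b ∈ rep x ↔ b ∈ l := by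
  have h1 : Hike.mk (rep x) = Hike.mk l := by rw [← (rep_spec h).1, hl]
  have h2 := multiset_eq_of_mk_eq h1
  constructor <;> intro hm
  · have : b ∈ (l : Multiset (SimpleCycle N Adj)) := h2 ▸ (by simpa using hm)
    simpa using this
  · have : b ∈ ((rep x : List (SimpleCycle N Adj)) : Multiset (SimpleCycle N Adj)) :=
      h2.symm ▸ (by simpa using hm)
    simpa using this

lemma rep_perm {x : Hike Adj} (h : SA x) {l : List (SimpleCycle N Adj)}
    (hl : x = Hike.mk l) : (rep x).Perm l := by
  have h1 : Hike.mk (rep x) = Hike.mk l := by rw [← (rep_spec h).1, hl]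
  exact Multiset.coe_eq_coe.mp (multiset_eq_of_mk_eq h1)

noncomputable instance : LinearOrder (SimpleCycle N Adj) :=
  LinearOrder.lift' (fun c => ((Fintype.equivFin (SimpleCycle N Adj)) c : ℕ))
    (fun a b hab => (Fintype.equivFin (SimpleCycle N Adj)).injective (Fin.val_injective hab))

noncomputable def Aset (x e : Hike Adj) : Finset (SimpleCycle N Adj) :=
  (rep x).toFinset ∪ Finset.univ.filter (fun a => Fdiv a e ∧ ∀ b ∈ rep x, D a b)

lemma mem_Aset {x e : Hike Adj} {a : SimpleCycle N Adj} :
    a ∈ Aset x e ↔ a ∈ rep x ∨ (Fdiv a e ∧ ∀ b ∈ rep x, D a b) := by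
  simp [Aset]

lemma Aset_min_unique {x e : Hike Adj} (hne : (Aset x e).Nonempty)
    {a : SimpleCycle N Adj} (hmem : a ∈ Aset x e) (hmin : ∀ b ∈ Aset x e, a ≤ b) :
    (Aset x e).min' hne = a :=
  le_antisymm ((Aset x e).min'_le a hmem) (Finset.le_min' _ _ _ hmin)

/-! ### Finiteness of the factorization index set -/

abbrev Idx {N : ℕ} {Adj : Fin N → Fin N → Prop} (h : Hike Adj) : Type _ :=
  {p : Hike Adj × Hike Adj // p.1 * p.2 = h}

lemma finite_len_le (n : ℕ) : {x : Hike Adj | len x ≤ n}.Finite := by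
  have h1 : {l : List (SimpleCycle N Adj) | l.length ≤ n}.Finite :=
    List.finite_length_le _ n
  apply Set.Finite.subset (h1.image Hike.mk)
  intro x hx
  obtain ⟨l, rfl⟩ := mk_surjective x
  exact ⟨l, by simpa [len_mk] using hx, rfl⟩

instance idx_finite (h : Hike Adj) : Finite (Idx h) := by
  have hS := finite_len_le (Adj := Adj) (len h)
  have : {p : Hike Adj × Hike Adj | p.1 * p.2 = h}.Finite := by
    apply Set.Finite.subset (hS.prod hS)
    rintro ⟨x, y⟩ hp
    simp only [Set.mem_setOf_eq] at hp
    constructor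
    · simp only [Set.mem_setOf_eq]
      rw [← hp, len_mul]
      omega
    · simp only [Set.mem_setOf_eq]
      rw [← hp, len_mul]
      omega
  exact this.to_subtype


/-! ### The candidate Möbius function and the sign-reversing involution -/

noncomputable def nu (x : Hike Adj) : ℂ := if SA x then (-1 : ℂ) ^ (len x) else 0

lemma nu_of_SA {x : Hike Adj} (h : SA x) : nu x = (-1 : ℂ) ^ (len x) := if_pos h

lemma nu_of_not_SA {x : Hike Adj} (h : ¬ SA x) : nu x = 0 := if_neg h

lemma case1_prod {a : SimpleCycle N Adj} {γ : List (SimpleCycle N Adj)}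
    (hpw : γ.Pairwise D) (ha : a ∈ γ) :
    Hike.mk (γ.erase a) * Hike.mk [a] = Hike.mk γ := by
  rw [← mk_append]
  have hperm : (γ.erase a ++ [a]).Perm γ :=
    (List.perm_append_singleton a _).trans (List.perm_cons_erase ha).symm
  exact mk_perm hperm ((hperm.pairwise_iff (fun h => D_symm h)).mpr hpw)


noncomputable def gpair (h : Hike Adj) (p : Idx h) : Idx h :=
  if hp : SA p.1.1 ∧ (Aset p.1.1 p.1.2).Nonempty then
    if ha : (Aset p.1.1 p.1.2).min' hp.2 ∈ rep p.1.1 then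
      ⟨(Hike.mk ((rep p.1.1).erase ((Aset p.1.1 p.1.2).min' hp.2)),
        Hike.mk [(Aset p.1.1 p.1.2).min' hp.2] * p.1.2), by
        rw [← mul_assoc, case1_prod (rep_spec hp.1).2 ha, ← (rep_spec hp.1).1]
        exact p.2⟩
    else if hf : Fdiv ((Aset p.1.1 p.1.2).min' hp.2) p.1.2 then
      ⟨(p.1.1 * Hike.mk [(Aset p.1.1 p.1.2).min' hp.2], hf.choose), by
        rw [mul_assoc, ← hf.choose_spec]
        exact p.2⟩
    else p
  else p

lemma gpair_val_case1 {h : Hike Adj} (p : Idx h) (hd : SA p.1.1)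
    (hne : (Aset p.1.1 p.1.2).Nonempty) (ha : (Aset p.1.1 p.1.2).min' hne ∈ rep p.1.1) :
    (gpair h p).1 = (Hike.mk ((rep p.1.1).erase ((Aset p.1.1 p.1.2).min' hne)),
      Hike.mk [(Aset p.1.1 p.1.2).min' hne] * p.1.2) := by
  unfold gpair
  rw [dif_pos ⟨hd, hne⟩, dif_pos ha]

lemma gpair_val_case2 {h : Hike Adj} (p : Idx h) (hd : SA p.1.1)
    (hne : (Aset p.1.1 p.1.2).Nonempty) (ha : (Aset p.1.1 p.1.2).min' hne ∉ rep p.1.1)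
    (hf : Fdiv ((Aset p.1.1 p.1.2).min' hne) p.1.2) :
    ∃ e', p.1.2 = Hike.mk [(Aset p.1.1 p.1.2).min' hne] * e' ∧
      (gpair h p).1 = (p.1.1 * Hike.mk [(Aset p.1.1 p.1.2).min' hne], e') := by
  refine ⟨hf.choose, hf.choose_spec, ?_⟩
  unfold gpair
  rw [dif_pos ⟨hd, hne⟩, dif_neg ha, dif_pos hf]

lemma gpair_id {h : Hike Adj} (p : Idx h) (hnp : ¬ SA p.1.1) : gpair h p = p := by
  unfold gpair
  rw [dif_neg (fun hc => hnp hc.1)]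

lemma rep_one : rep (1 : Hike Adj) = [] := by
  have h1 : SA (1 : Hike Adj) := ⟨[], mk_nil.symm, List.Pairwise.nil⟩
  have := (rep_spec h1).1
  have hlen : (rep (1 : Hike Adj)).length = 0 := by
    rw [← len_mk (Adj := Adj) (rep (1 : Hike Adj)), ← this, len_one]
  exact List.length_eq_zero_iff.mp hlen

lemma Aset_nonempty {h : Hike Adj} (hh : h ≠ 1) (p : Idx h) (hd : SA p.1.1) :
    (Aset p.1.1 p.1.2).Nonempty := by
  rcases hrep : rep p.1.1 with _ | ⟨x, γ⟩
  · -- p.1.1 = 1, so p.1.2 = h ≠ 1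
    have hd1 : p.1.1 = 1 := by
      rw [(rep_spec hd).1, hrep, mk_nil]
    have he : p.1.2 = h := by
      have h2 := p.2
      rw [hd1, one_mul] at h2
      exact h2
    obtain ⟨l, hl⟩ := mk_surjective p.1.2
    cases l with
    | nil => exact absurd (by rw [← he, hl, mk_nil]) hh
    | cons y l' =>
        refine ⟨y, mem_Aset.mpr (Or.inr ⟨⟨Hike.mk l', by rw [hl]; exact mk_cons _ _⟩, ?_⟩)⟩
        rw [hrep]
        simp
  · exact ⟨x, mem_Aset.mpr (Or.inl (by rw [hrep]; simp))⟩

lemma Fdiv_of_min_not_mem {h : Hike Adj} (p : Idx h) (hd : SA p.1.1)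
    (hne : (Aset p.1.1 p.1.2).Nonempty) (ha : (Aset p.1.1 p.1.2).min' hne ∉ rep p.1.1) :
    Fdiv ((Aset p.1.1 p.1.2).min' hne) p.1.2 ∧
      ∀ b ∈ rep p.1.1, D ((Aset p.1.1 p.1.2).min' hne) b := by
  have := mem_Aset.mp ((Aset p.1.1 p.1.2).min'_mem hne)
  rcases this with hmem | hmem
  · exact absurd hmem ha
  · exact hmem

lemma len_rep {x : Hike Adj} (h : SA x) : len x = (rep x).length := by
  calc len x = len (Hike.mk (rep x)) := by rw [← (rep_spec h).1]
    _ = (rep x).length := len_mk _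


lemma D_of_pairwise {l : List (SimpleCycle N Adj)} (h : l.Pairwise D)
    {a b : SimpleCycle N Adj} (ha : a ∈ l) (hb : b ∈ l) (hne : a ≠ b) : D a b :=
  haveI : Std.Symm (D (Adj := Adj)) := ⟨fun _ _ hxy => D_symm hxy⟩
  h.forall ha hb hne

/-- Second application data in case 1. -/
lemma gpair_min_case1 {h : Hike Adj} (p : Idx h) (hd : SA p.1.1)
    (hne : (Aset p.1.1 p.1.2).Nonempty) (ha : (Aset p.1.1 p.1.2).min' hne ∈ rep p.1.1)
    (hd₂ : SA (gpair h p).1.1) (hne₂ : (Aset (gpair h p).1.1 (gpair h p).1.2).Nonempty) :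
    (Aset (gpair h p).1.1 (gpair h p).1.2).min' hne₂ = (Aset p.1.1 p.1.2).min' hne := by
  set a := (Aset p.1.1 p.1.2).min' hne with ha_def
  have hval := gpair_val_case1 p hd hne ha
  have e1 : (gpair h p).1.1 = Hike.mk ((rep p.1.1).erase a) := by rw [hval]
  have e2 : (gpair h p).1.2 = Hike.mk [a] * p.1.2 := by rw [hval]
  have hnd : (rep p.1.1).Nodup := rep_nodup hd
  have hmem₂ : ∀ b, b ∈ rep (gpair h p).1.1 ↔ b ∈ (rep p.1.1).erase a :=
    fun b => mem_rep_iff hd₂ e1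
  apply Aset_min_unique
  · -- a belongs to the new A-set
    apply mem_Aset.mpr
    refine Or.inr ⟨⟨p.1.2, e2⟩, ?_⟩
    intro b hb
    rw [hmem₂ b, hnd.mem_erase_iff] at hb
    exact D_of_pairwise (rep_spec hd).2 ha hb.2 hb.1.symm
  · -- minimality
    intro b hb
    rcases mem_Aset.mp hb with hb | ⟨hfb, hball⟩
    · rw [hmem₂ b, hnd.mem_erase_iff] at hb
      exact Finset.min'_le _ _ (mem_Aset.mpr (Or.inl hb.2))
    · by_cases hba : b = a
      · exact le_of_eq hba.symm
      · rw [e2] at hfb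
        obtain ⟨hDba, hfb'⟩ := Fdiv_cons hba hfb
        apply Finset.min'_le
        apply mem_Aset.mpr
        refine Or.inr ⟨hfb', ?_⟩
        intro c hc
        by_cases hca : c = a
        · exact hca ▸ hDba
        · exact hball c ((hmem₂ c).mpr (hnd.mem_erase_iff.mpr ⟨hca, hc⟩))

/-- Second application data in case 2. -/
lemma gpair_min_case2 {h : Hike Adj} (p : Idx h) (hd : SA p.1.1)
    (hne : (Aset p.1.1 p.1.2).Nonempty) (ha : (Aset p.1.1 p.1.2).min' hne ∉ rep p.1.1)
    (hd₂ : SA (gpair h p).1.1) (hne₂ : (Aset (gpair h p).1.1 (gpair h p).1.2).Nonempty) :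
    (Aset (gpair h p).1.1 (gpair h p).1.2).min' hne₂ = (Aset p.1.1 p.1.2).min' hne := by
  set a := (Aset p.1.1 p.1.2).min' hne with ha_def
  obtain ⟨hf, hDall⟩ := Fdiv_of_min_not_mem p hd hne ha
  obtain ⟨e', he', hval⟩ := gpair_val_case2 p hd hne ha hf
  have e1 : (gpair h p).1.1 = p.1.1 * Hike.mk [a] := by rw [hval]
  have e2 : (gpair h p).1.2 = e' := by rw [hval]
  have hq1 : (gpair h p).1.1 = Hike.mk (rep p.1.1 ++ [a]) := by
    rw [e1, mk_append]
    rw [← (rep_spec hd).1]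
  have hmem₂ : ∀ b, b ∈ rep (gpair h p).1.1 ↔ b ∈ rep p.1.1 ++ [a] :=
    fun b => mem_rep_iff hd₂ hq1
  apply Aset_min_unique
  · exact mem_Aset.mpr (Or.inl ((hmem₂ a).mpr (by simp)))
  · intro b hb
    rcases mem_Aset.mp hb with hb | ⟨hfb, hball⟩
    · rw [hmem₂ b] at hb
      rcases List.mem_append.mp hb with hb | hb
      · exact Finset.min'_le _ _ (mem_Aset.mpr (Or.inl hb))
      · simp at hb
        exact le_of_eq hb.symm
    · by_cases hba : b = a
      · exact le_of_eq hba.symm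
      · have hDba : D b a := hball a ((hmem₂ a).mpr (by simp))
        apply Finset.min'_le
        apply mem_Aset.mpr
        refine Or.inr ⟨?_, ?_⟩
        · rw [he']
          rw [e2] at hfb
          exact Fdiv_cons_of hDba hfb
        · intro c hc
          exact hball c ((hmem₂ c).mpr (by simp [hc]))


lemma gpair_SA_case1 {h : Hike Adj} (p : Idx h) (hd : SA p.1.1)
    (hne : (Aset p.1.1 p.1.2).Nonempty) (ha : (Aset p.1.1 p.1.2).min' hne ∈ rep p.1.1) :
    SA (gpair h p).1.1 := by
  refine ⟨(rep p.1.1).erase ((Aset p.1.1 p.1.2).min' hne), ?_, ?_⟩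
  · rw [gpair_val_case1 p hd hne ha]
  · exact (rep_spec hd).2.sublist List.erase_sublist

lemma gpair_SA_case2 {h : Hike Adj} (p : Idx h) (hd : SA p.1.1)
    (hne : (Aset p.1.1 p.1.2).Nonempty) (ha : (Aset p.1.1 p.1.2).min' hne ∉ rep p.1.1) :
    SA (gpair h p).1.1 := by
  obtain ⟨hf, hDall⟩ := Fdiv_of_min_not_mem p hd hne ha
  obtain ⟨e', he', hval⟩ := gpair_val_case2 p hd hne ha hf
  refine ⟨rep p.1.1 ++ [(Aset p.1.1 p.1.2).min' hne], ?_, ?_⟩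
  · rw [hval]
    show p.1.1 * Hike.mk [(Aset p.1.1 p.1.2).min' hne] = _
    rw [mk_append, ← (rep_spec hd).1]
  · rw [List.pairwise_append]
    refine ⟨(rep_spec hd).2, List.pairwise_singleton _ _, ?_⟩
    intro x hx y hy
    simp at hy
    exact hy ▸ D_symm (hDall x hx)

/-- The key involution property. -/
theorem gpair_gpair {h : Hike Adj} (hh : h ≠ 1) (p : Idx h) :
    gpair h (gpair h p) = p := by
  by_cases hd : SA p.1.1
  · have hne := Aset_nonempty hh p hd
    set a := (Aset p.1.1 p.1.2).min' hne with ha_def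
    have hnd : (rep p.1.1).Nodup := rep_nodup hd
    by_cases ha : a ∈ rep p.1.1
    · -- case 1 then case 2
      have hval := gpair_val_case1 p hd hne ha
      have e1 : (gpair h p).1.1 = Hike.mk ((rep p.1.1).erase a) := by rw [hval]
      have e2 : (gpair h p).1.2 = Hike.mk [a] * p.1.2 := by rw [hval]
      have hd₂ : SA (gpair h p).1.1 := gpair_SA_case1 p hd hne ha
      have hne₂ := Aset_nonempty hh (gpair h p) hd₂
      have hmin₂ : (Aset (gpair h p).1.1 (gpair h p).1.2).min' hne₂ = a :=
        gpair_min_case1 p hd hne ha hd₂ hne₂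
      have ha₂ : (Aset (gpair h p).1.1 (gpair h p).1.2).min' hne₂ ∉ rep (gpair h p).1.1 := by
        rw [hmin₂]
        intro hc
        rw [mem_rep_iff hd₂ e1, hnd.mem_erase_iff] at hc
        exact hc.1 rfl
      have hf₂ : Fdiv ((Aset (gpair h p).1.1 (gpair h p).1.2).min' hne₂) (gpair h p).1.2 := by
        rw [hmin₂]
        exact ⟨p.1.2, e2⟩
      obtain ⟨e₃, he₃, hval₂⟩ := gpair_val_case2 (gpair h p) hd₂ hne₂ ha₂ hf₂
      rw [hmin₂] at he₃ hval₂
      rw [e2] at he₃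
      have he₃' : e₃ = p.1.2 := (cancel_left he₃.symm)
      apply Subtype.ext
      apply Prod.ext
      · rw [hval₂]
        show (gpair h p).1.1 * Hike.mk [a] = p.1.1
        rw [e1, case1_prod (rep_spec hd).2 ha, ← (rep_spec hd).1]
      · rw [hval₂]
        exact he₃'
    · -- case 2 then case 1
      obtain ⟨hf, hDall⟩ := Fdiv_of_min_not_mem p hd hne ha
      obtain ⟨e', he', hval⟩ := gpair_val_case2 p hd hne ha hf
      have e1 : (gpair h p).1.1 = p.1.1 * Hike.mk [a] := by rw [hval]
      have e2 : (gpair h p).1.2 = e' := by rw [hval]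
      have hq1 : (gpair h p).1.1 = Hike.mk (rep p.1.1 ++ [a]) := by
        rw [e1, mk_append, ← (rep_spec hd).1]
      have hd₂ : SA (gpair h p).1.1 := gpair_SA_case2 p hd hne ha
      have hne₂ := Aset_nonempty hh (gpair h p) hd₂
      have hmin₂ : (Aset (gpair h p).1.1 (gpair h p).1.2).min' hne₂ = a :=
        gpair_min_case2 p hd hne ha hd₂ hne₂
      have ha₂ : (Aset (gpair h p).1.1 (gpair h p).1.2).min' hne₂ ∈ rep (gpair h p).1.1 := by
        rw [hmin₂, mem_rep_iff hd₂ hq1]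
        simp
      have hval₂ := gpair_val_case1 (gpair h p) hd₂ hne₂ ha₂
      rw [hmin₂] at hval₂
      apply Subtype.ext
      apply Prod.ext
      · rw [hval₂]
        show Hike.mk ((rep (gpair h p).1.1).erase a) = p.1.1
        have hperm : (rep (gpair h p).1.1).Perm (rep p.1.1 ++ [a]) := rep_perm hd₂ hq1
        have hperm' : ((rep (gpair h p).1.1).erase a).Perm (rep p.1.1) := by
          have := hperm.erase a
          rwa [List.erase_append_right _ ha, List.erase_cons_head, List.append_nil] at this
        rw [mk_perm hperm' ((rep_spec hd₂).2.sublist List.erase_sublist),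
          ← (rep_spec hd).1]
      · rw [hval₂]
        show Hike.mk [a] * (gpair h p).1.2 = p.1.2
        rw [e2, ← he']
  · rw [gpair_id p hd, gpair_id p hd]


lemma gpair_len_of_SA {h : Hike Adj} (hh : h ≠ 1) (p : Idx h) (hd : SA p.1.1) :
    len (gpair h p).1.1 ≠ len p.1.1 ∧ nu (gpair h p).1.1 = -(nu p.1.1) := by
  have hne := Aset_nonempty hh p hd
  set a := (Aset p.1.1 p.1.2).min' hne with ha_def
  have hlenp : len p.1.1 = (rep p.1.1).length := len_rep hd
  by_cases ha : a ∈ rep p.1.1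
  · have hval := gpair_val_case1 p hd hne ha
    have e1 : (gpair h p).1.1 = Hike.mk ((rep p.1.1).erase a) := by rw [hval]
    have hd₂ : SA (gpair h p).1.1 := gpair_SA_case1 p hd hne ha
    have hlq : len (gpair h p).1.1 = (rep p.1.1).length - 1 := by
      rw [e1, len_mk, List.length_erase_of_mem ha]
    have hpos : 1 ≤ (rep p.1.1).length := List.length_pos_iff.mpr (List.ne_nil_of_mem ha)
    constructor
    · omega
    · rw [nu_of_SA hd₂, nu_of_SA hd, hlq, hlenp]
      obtain ⟨m, hm⟩ : ∃ m, (rep p.1.1).length = m + 1 := ⟨(rep p.1.1).length - 1, by omega⟩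
      rw [hm]
      simp [pow_succ]
  · obtain ⟨hf, hDall⟩ := Fdiv_of_min_not_mem p hd hne ha
    obtain ⟨e', he', hval⟩ := gpair_val_case2 p hd hne ha hf
    have hq1 : (gpair h p).1.1 = Hike.mk (rep p.1.1 ++ [a]) := by
      rw [hval]
      show p.1.1 * Hike.mk [a] = _
      rw [mk_append, ← (rep_spec hd).1]
    have hd₂ : SA (gpair h p).1.1 := gpair_SA_case2 p hd hne ha
    have hlq : len (gpair h p).1.1 = (rep p.1.1).length + 1 := by
      rw [hq1, len_mk]
      simp
    constructor
    · omega
    · rw [nu_of_SA hd₂, nu_of_SA hd, hlq, hlenp, pow_succ]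
      ring

lemma nu_add {h : Hike Adj} (hh : h ≠ 1) (p : Idx h) :
    nu p.1.1 + nu (gpair h p).1.1 = 0 := by
  by_cases hd : SA p.1.1
  · rw [(gpair_len_of_SA hh p hd).2]
    ring
  · rw [gpair_id p hd, nu_of_not_SA hd]
    ring

lemma gpair_ne {h : Hike Adj} (hh : h ≠ 1) (p : Idx h) (hnu : nu p.1.1 ≠ 0) :
    gpair h p ≠ p := by
  have hd : SA p.1.1 := by
    by_contra hc
    exact hnu (nu_of_not_SA hc)
  intro hc
  exact (gpair_len_of_SA hh p hd).1 (by rw [hc])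

/-- The Cartier–Foata identity: `nu` is the convolution inverse of `1`. -/
theorem nu_sum (h : Hike Adj) :
    (∑ᶠ p : Idx h, nu (p : Hike Adj × Hike Adj).1) = if h = 1 then 1 else 0 := by
  haveI : Fintype (Idx h) := Fintype.ofFinite _
  rw [finsum_eq_sum_of_fintype]
  by_cases hh : h = 1
  · subst hh
    rw [if_pos rfl]
    have huniq : ∀ p : Idx (1 : Hike Adj), p = ⟨(1, 1), one_mul 1⟩ := by
      intro p
      have hl : len p.1.1 + len p.1.2 = 0 := by
        rw [← len_mul, p.2, len_one]
      exact Subtype.ext (Prod.ext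
        (eq_one_of_len_eq_zero (by omega))
        (eq_one_of_len_eq_zero (by omega)))
    rw [Finset.sum_eq_single (⟨(1, 1), one_mul 1⟩ : Idx (1 : Hike Adj))]
    · show nu 1 = 1
      rw [nu_of_SA ⟨[], mk_nil.symm, List.Pairwise.nil⟩, len_one, pow_zero]
    · intro b _ hb
      exact absurd (huniq b) hb
    · intro hc
      exact absurd (Finset.mem_univ _) hc
  · rw [if_neg hh]
    exact Finset.sum_involution (fun p _ => gpair h p)
      (fun p _ => nu_add hh p)
      (fun p _ hnu => gpair_ne hh p hnu)
      (fun p _ => Finset.mem_univ _)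
      (fun p _ => gpair_gpair hh p)


lemma finsum_idx_one (f : Hike Adj → ℂ) :
    (∑ᶠ p : Idx (1 : Hike Adj), f (p : Hike Adj × Hike Adj).1) = f 1 := by
  haveI : Fintype (Idx (1 : Hike Adj)) := Fintype.ofFinite _
  rw [finsum_eq_sum_of_fintype]
  have huniq : ∀ p : Idx (1 : Hike Adj), p = ⟨(1, 1), one_mul 1⟩ := by
    intro p
    have hl : len p.1.1 + len p.1.2 = 0 := by
      rw [← len_mul, p.2, len_one]
    exact Subtype.ext (Prod.ext
      (eq_one_of_len_eq_zero (by omega))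
      (eq_one_of_len_eq_zero (by omega)))
  rw [Finset.sum_eq_single (⟨(1, 1), one_mul 1⟩ : Idx (1 : Hike Adj))]
  · intro b _ hb
    exact absurd (huniq b) hb
  · intro hc
    exact absurd (Finset.mem_univ _) hc

theorem mu_eq_nu (μ : Hike Adj → ℂ)
    (hμ : ∀ h : Hike Adj,
      (∑ᶠ p : Idx h, μ (p : Hike Adj × Hike Adj).1) = if h = 1 then 1 else 0) :
    ∀ h, μ h = nu h := by
  have key : ∀ n (h : Hike Adj), len h ≤ n → μ h = nu h := by
    intro n
    induction n with
    | zero =>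
        intro h hlen
        have h1 : h = 1 := eq_one_of_len_eq_zero (Nat.le_zero.mp hlen)
        subst h1
        have hμ1 : μ 1 = 1 := by
          have := hμ 1
          rwa [finsum_idx_one, if_pos rfl] at this
        have hν1 : nu (1 : Hike Adj) = 1 := by
          have := nu_sum (Adj := Adj) 1
          rwa [finsum_idx_one, if_pos rfl] at this
        rw [hμ1, hν1]
    | succ n ih =>
        intro h hlen
        by_cases hle : len h ≤ n
        · exact ih h hle
        have hlh : len h = n + 1 := by omega
        haveI : Fintype (Idx h) := Fintype.ofFinite _
        have hs : ∑ p : Idx h, (μ (p : Idx h).1.1 - nu (p : Idx h).1.1) = 0 := by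
          rw [Finset.sum_sub_distrib, ← finsum_eq_sum_of_fintype, ← finsum_eq_sum_of_fintype,
            hμ h, nu_sum h]
          ring
        have hsingle := Finset.sum_eq_single (s := Finset.univ)
          (f := fun p : Idx h => μ p.1.1 - nu p.1.1)
          (⟨(h, 1), mul_one h⟩ : Idx h)
          (by
            intro b _ hb
            have hble : len b.1.1 ≤ n := by
              have htot : len b.1.1 + len b.1.2 = n + 1 := by
                rw [← len_mul, b.2, hlh]
              by_contra hc
              have h2 : len b.1.2 = 0 := by omega
              have e2 : b.1.2 = 1 := eq_one_of_len_eq_zero h2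
              have e1 : b.1.1 = h := by
                have := b.2
                rwa [e2, mul_one] at this
              exact hb (Subtype.ext (Prod.ext e1 e2))
            rw [sub_eq_zero]
            exact ih b.1.1 hble)
          (fun hc => absurd (Finset.mem_univ _) hc)
        rw [hs] at hsingle
        exact sub_eq_zero.mp hsingle.symm
  intro h
  exact key (len h) h le_rfl

end HikeAux

/-- the Möbius function of the trace monoid of hikes.  If `μ : Hike → ℂ` is the
convolution inverse of the constant function `1`, i.e. for every hike `h` the (finite) sum of
`μ(d)` over all factorizations `h = d·e` equals `[h = 1]`, then `μ` is supported on
self-avoiding hikes (words of pairwise vertex-disjoint simple cycles), where it takes the value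
`(-1)^{Ω(h)}` with `Ω(h)` the number of prime factors. -/
theorem moebius_function_of_hikes {N : ℕ} (Adj : Fin N → Fin N → Prop)
    (μ : Hike Adj → ℂ)
    (hμ : ∀ h : Hike Adj,
      (∑ᶠ p : {p : Hike Adj × Hike Adj // p.1 * p.2 = h}, μ (p : Hike Adj × Hike Adj).1) =
        if h = 1 then 1 else 0) :
    (∀ l : List (SimpleCycle N Adj),
        l.Pairwise (fun a b => Disjoint a.verts b.verts) →
        μ (Hike.mk l) = (-1 : ℂ) ^ l.length) ∧
    (∀ h : Hike Adj,
        (¬ ∃ l : List (SimpleCycle N Adj),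
            h = Hike.mk l ∧ l.Pairwise (fun a b => Disjoint a.verts b.verts)) →
        μ h = 0) := by
  
  constructor
  · intro l hl
    have hSA : HikeAux.SA (Hike.mk l) := ⟨l, rfl, hl⟩
    rw [HikeAux.mu_eq_nu μ hμ, HikeAux.nu_of_SA hSA, HikeAux.len_mk]
  · intro h hnot
    rw [HikeAux.mu_eq_nu μ hμ, HikeAux.nu_of_not_SA hnot]
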